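/- Let n ≥ 1 and let D = {u ∈ ℝ^n : 0 < u_i for all i and ∑_{i=1}^n u_i < 1}, with u_0 := 1 - ∑_{i=1}^n u_i. Let (q_{ij})_{i,j=1}^n and (r_{ij})_{i,j=1}^n be real matrices with q_{ij} ≥ r_{ij} ≥ 0 for all i,j, and suppose the symmetric part of (q_{ij}+r_{ij}) is positive definite with smallest eigenvalue α > 0. Define q_i(u) = ∑_{j=1}^n q_{ij} u_j, r_i(u) = ∑_{j=1}^n r_{ij} u_j, the Hessian H(u)_{ij} = δ_{ij}/u_i + 1/u_0, and A(u)_{ij} = (q_i(u) - r_i(u)) δ_{ij} + u_i ( q_{ij} - q_j(u) + r_{ij} + r_j(u) - ∑_{ℓ=1}^n u_ℓ (q_{ℓj} + r_{ℓj}) ). Then for all u ∈ D and all z ∈ ℝ^n, zᵀ H(u) A(u) z ≥ α |z|². -/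
import Mathlib


open Finset

/-- Solvent volume fraction `u₀ = 1 - ∑ uᵢ`. -/
noncomputable def solvent (n : ℕ) (u : Fin n → ℝ) : ℝ := 1 - ∑ i, u i

/-- Linear pressure `qᵢ(u) = ∑ⱼ q_{ij} uⱼ`. -/
noncomputable def press (n : ℕ) (q : Fin n → Fin n → ℝ) (u : Fin n → ℝ) (i : Fin n) : ℝ :=
  ∑ j, q i j * u j

/-- Hessian of the Boltzmann entropy: `H(u)_{ij} = δ_{ij}/uᵢ + 1/u₀`. -/
noncomputable def hessB (n : ℕ) (u : Fin n → ℝ) (i j : Fin n) : ℝ :=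
  (if i = j then 1 / u i else 0) + 1 / solvent n u

/-- Diffusion matrix of the multiphase cross-diffusion system. -/
noncomputable def diffA (n : ℕ) (q r : Fin n → Fin n → ℝ) (u : Fin n → ℝ) (i j : Fin n) : ℝ :=
  (press n q u i - press n r u i) * (if i = j then 1 else 0) +
    u i * (q i j - press n q u j + r i j + press n r u j -
      ∑ l, u l * (q l j + r l j))

lemma sumA (n : ℕ) (q r : Fin n → Fin n → ℝ) (u : Fin n → ℝ) (j : Fin n) :
    ∑ k, diffA n q r u k j =
      solvent n u * (press n q u j - press n r u j + ∑ l, u l * (q l j + r l j)) := by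
  simp only [diffA]
  rw [Finset.sum_add_distrib]
  have h1 : ∑ k, (press n q u k - press n r u k) * (if k = j then (1:ℝ) else 0)
      = press n q u j - press n r u j := by
    rw [Finset.sum_eq_single j]
    · simp
    · intro b _ hb; simp [hb]
    · simp
  have h2 : ∑ k, u k * (q k j - press n q u j + r k j + press n r u j -
      ∑ l, u l * (q l j + r l j))
      = (∑ l, u l * (q l j + r l j))
        - (∑ k, u k) * press n q u j + (∑ k, u k) * press n r u j
        - (∑ k, u k) * ∑ l, u l * (q l j + r l j) := by
    have step : ∑ k, u k * (q k j - press n q u j + r k j + press n r u j -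
        ∑ l, u l * (q l j + r l j))
        = ∑ k, (u k * (q k j + r k j)
          - u k * press n q u j + u k * press n r u j
          - u k * (∑ l, u l * (q l j + r l j))) := by
      apply Finset.sum_congr rfl
      intro k _; ring
    rw [step]
    simp [Finset.sum_sub_distrib, Finset.sum_add_distrib, Finset.sum_mul]
  rw [h1, h2, solvent]
  ring

lemma key (n : ℕ) (q r : Fin n → Fin n → ℝ) (u : Fin n → ℝ)
    (hu : ∀ i, 0 < u i) (hsum : ∑ i, u i < 1) (i j : Fin n) :
    ∑ k, hessB n u i k * diffA n q r u k j =
      (if i = j then (press n q u i - press n r u i) / u i else 0) + (q i j + r i j) := by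
  have hu0 : solvent n u ≠ 0 := by
    have : 0 < solvent n u := by simp only [solvent]; linarith
    exact ne_of_gt this
  have hui : u i ≠ 0 := ne_of_gt (hu i)
  simp only [hessB, add_mul]
  rw [Finset.sum_add_distrib]
  have h1 : ∑ k, (if i = k then 1 / u i else 0) * diffA n q r u k j
      = diffA n q r u i j / u i := by
    rw [Finset.sum_eq_single i]
    · simp [div_eq_mul_inv]; ring
    · intro b _ hb; simp [Ne.symm hb]
    · simp
  have h2 : ∑ k, 1 / solvent n u * diffA n q r u k j
      = press n q u j - press n r u j + ∑ l, u l * (q l j + r l j) := by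
    rw [← Finset.mul_sum, sumA]
    field_simp
  rw [h1, h2]
  simp only [diffA]
  by_cases hij : i = j
  · subst hij
    simp only [if_true, mul_one]
    field_simp
    ring
  · simp only [hij, if_false, mul_zero]
    field_simp
    ring

theorem stmt_0 (n : ℕ) (hn : 1 ≤ n) (q r : Fin n → Fin n → ℝ) (α : ℝ) (hα : 0 < α)
    (hr : ∀ i j, 0 ≤ r i j) (hqr : ∀ i j, r i j ≤ q i j)
    (hpd : ∀ z : Fin n → ℝ, α * ∑ i, (z i) ^ 2 ≤ ∑ i, ∑ j, (q i j + r i j) * z i * z j)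
    (u : Fin n → ℝ) (hu : ∀ i, 0 < u i) (hsum : ∑ i, u i < 1)
    (z : Fin n → ℝ) :
    α * ∑ i, (z i) ^ 2 ≤
      ∑ i, ∑ j, z i * (∑ k, hessB n u i k * diffA n q r u k j) * z j := by
  have hkey : ∀ i j, ∑ k, hessB n u i k * diffA n q r u k j =
      (if i = j then (press n q u i - press n r u i) / u i else 0) + (q i j + r i j) :=
    key n q r u hu hsum
  have hrw : ∑ i, ∑ j, z i * (∑ k, hessB n u i k * diffA n q r u k j) * z j
      = (∑ i, (press n q u i - press n r u i) / u i * z i ^ 2)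
        + ∑ i, ∑ j, (q i j + r i j) * z i * z j := by
    rw [← Finset.sum_add_distrib]
    apply Finset.sum_congr rfl
    intro i _
    rw [show ∀ a b : ℝ, a + b = a + b from fun _ _ => rfl]
    calc ∑ j, z i * (∑ k, hessB n u i k * diffA n q r u k j) * z j
        = ∑ j, (z i * ((if i = j then (press n q u i - press n r u i) / u i else 0)) * z j
            + (q i j + r i j) * z i * z j) := by
          apply Finset.sum_congr rfl
          intro j _
          rw [hkey i j]; ring
      _ = (∑ j, z i * ((if i = j then (press n q u i - press n r u i) / u i else 0)) * z j)
            + ∑ j, (q i j + r i j) * z i * z j := Finset.sum_add_distrib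
      _ = (press n q u i - press n r u i) / u i * z i ^ 2
            + ∑ j, (q i j + r i j) * z i * z j := by
          congr 1
          rw [Finset.sum_eq_single i]
          · simp; ring
          · intro b _ hb; simp [Ne.symm hb]
          · simp
  rw [hrw]
  have hnn : 0 ≤ ∑ i, (press n q u i - press n r u i) / u i * z i ^ 2 := by
    apply Finset.sum_nonneg
    intro i _
    apply mul_nonneg _ (sq_nonneg _)
    apply div_nonneg _ (le_of_lt (hu i))
    simp only [press, ← Finset.sum_sub_distrib]
    apply Finset.sum_nonneg
    intro j _
    have := hqr i j
    have := (hu j).le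
    nlinarith
  linarith [hpd z]
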